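/- Let D₁ be a nonnegative self-adjoint operator on L²(M) and let F be bounded Borel on [0,∞) with sup_λ |(1+λ)^γ F(λ)| < ∞ for some γ > n/2 + 1. Suppose ‖(1+t²D₁²)^{-σ}‖_{L¹→L²} ≤ C t^{-n/2}(1+t)^{n/2-ρ} for all σ ≥ (γ-1)/2 and t>0. Then ‖t D₁ F(t D₁)‖_{L¹→L²} ≤ C' t^{-n/2}(1+t)^{n/2-ρ} for all t > 0. -/

import Mathlib

open MeasureTheory Real

/-- `OpBound12 μ T K` expresses the `L¹ → L²` operator norm bound `‖T‖_{1;2} ≤ K`. -/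
def OpBound12 {X : Type*} [MeasurableSpace X] (μ : Measure X)
    (T : Lp ℂ 2 μ →L[ℂ] Lp ℂ 2 μ) (K : ℝ) : Prop :=
  ∀ (f : X → ℂ) (_ : Integrable f μ) (hf2 : MemLp f 2 μ),
    ‖T (hf2.toLp f)‖ ≤ K * ∫ x, ‖f x‖ ∂μ

/-- Let `D₁` be a nonnegative self-adjoint operator on `L²(M)`, encoded by its Borel
functional calculus `Φ` (multiplicative, with the sup-norm bound over the nonnegative
spectral parameters).  If `F` is bounded Borel with `sup_λ (1+λ)^γ |F(λ)| < ∞` for some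
`γ > n/2 + 1`, and `‖(1+t²D₁²)^{-σ}‖_{1;2} ≤ C t^{-n/2}(1+t)^{n/2-ρ}` for all
`σ ≥ (γ-1)/2` and `t > 0`, then `‖tD₁F(tD₁)‖_{1;2} ≤ C' t^{-n/2}(1+t)^{n/2-ρ}`. -/
theorem tD_F_tD_bound
    {X : Type*} [MeasurableSpace X] (μ : Measure X) [SigmaFinite μ]
    (n ρ C γ : ℝ) (hn : 0 < n) (hρ : 0 ≤ ρ) (hC : 0 < C) (hγ : n/2 + 1 < γ)
    (Φ : (ℝ → ℂ) → (Lp ℂ 2 μ →L[ℂ] Lp ℂ 2 μ))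
    (hmul : ∀ F G : ℝ → ℂ, Φ (fun l => F l * G l) = (Φ F).comp (Φ G))
    (hnorm : ∀ (G : ℝ → ℂ) (K : ℝ), 0 ≤ K → (∀ l : ℝ, 0 ≤ l → ‖G l‖ ≤ K) → ‖Φ G‖ ≤ K)
    (F : ℝ → ℂ) (hFmeas : Measurable F) (hFbdd : ∃ B : ℝ, ∀ l : ℝ, ‖F l‖ ≤ B)
    (hFdecay : ∃ K : ℝ, ∀ l : ℝ, 0 < l → (1 + l) ^ γ * ‖F l‖ ≤ K)
    (hres : ∀ σ : ℝ, (γ - 1)/2 ≤ σ → ∀ t : ℝ, 0 < t →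
      OpBound12 μ (Φ (fun l => (((1 + t ^ 2 * l ^ 2) ^ (-σ) : ℝ) : ℂ)))
        (C * t ^ (-(n/2)) * (1 + t) ^ (n/2 - ρ))) :
    ∃ C' > 0, ∀ t : ℝ, 0 < t →
      OpBound12 μ (Φ (fun l => ((t * l : ℝ) : ℂ) * F (t * l)))
        (C' * t ^ (-(n/2)) * (1 + t) ^ (n/2 - ρ)) := by
  obtain ⟨K, hK⟩ := hFdecay
  set σ : ℝ := (γ - 1) / 2 with hσdef
  have hσ : 0 < σ := by
    have : (1:ℝ) < γ := by nlinarith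
    simp only [hσdef]; linarith
  set K' : ℝ := max K 0 with hK'def
  have hK'0 : 0 ≤ K' := le_max_right _ _
  refine ⟨C * (K' + 1), by positivity, ?_⟩
  intro t ht
  set G : ℝ → ℂ := fun l => (((1 + t ^ 2 * l ^ 2) ^ σ * (t * l) : ℝ) : ℂ) * F (t * l)
    with hGdef
  have hfact : (fun l => ((t * l : ℝ) : ℂ) * F (t * l))
      = fun l => G l * (((1 + t ^ 2 * l ^ 2) ^ (-σ) : ℝ) : ℂ) := by
    funext l
    have ha : (0:ℝ) < 1 + t ^ 2 * l ^ 2 := by positivity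
    have hane : ((((1 + t ^ 2 * l ^ 2) ^ σ : ℝ)) : ℂ) ≠ 0 := by
      exact_mod_cast (Real.rpow_pos_of_pos ha σ).ne'
    simp only [hGdef, Real.rpow_neg ha.le]
    push_cast
    field_simp
  have hGbound : ∀ l : ℝ, 0 ≤ l → ‖G l‖ ≤ K' := by
    intro l hl
    have hs : 0 ≤ t * l := mul_nonneg ht.le hl
    have ha : (0:ℝ) < 1 + t ^ 2 * l ^ 2 := by positivity
    have hnormG : ‖G l‖ = (1 + t ^ 2 * l ^ 2) ^ σ * (t * l) * ‖F (t * l)‖ := by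
      simp only [hGdef, norm_mul, Complex.norm_real, Real.norm_eq_abs]
      rw [abs_of_nonneg (Real.rpow_nonneg ha.le σ), abs_of_nonneg ht.le, abs_of_nonneg hl]
    rw [hnormG]
    rcases eq_or_lt_of_le hs with hseq | hspos
    · rw [← hseq]; simpa using hK'0
    · set s : ℝ := t * l
      have hts : t ^ 2 * l ^ 2 = s ^ 2 := by ring
      rw [hts]
      have h1 : (1 + s ^ 2) ^ σ ≤ (1 + s) ^ (γ - 1) := by
        have hle : 1 + s ^ 2 ≤ (1 + s) ^ 2 := by nlinarith
        calc (1 + s ^ 2) ^ σ ≤ ((1 + s) ^ 2) ^ σ :=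
              Real.rpow_le_rpow (by positivity) hle hσ.le
          _ = (1 + s) ^ (γ - 1) := by
              rw [← Real.rpow_natCast (1 + s) 2, ← Real.rpow_mul (by positivity)]
              norm_num [hσdef]; ring_nf
      have h2 : (1 + s ^ 2) ^ σ * s * ‖F s‖ ≤ (1 + s) ^ (γ - 1) * (1 + s) * ‖F s‖ := by
        have hs1 : s ≤ 1 + s := by linarith
        have := mul_le_mul (mul_le_mul h1 hs1 hspos.le (by positivity))
          (le_refl ‖F s‖) (norm_nonneg _)
          (by positivity)
        simpa using this
      have h3 : (1 + s) ^ (γ - 1) * (1 + s) * ‖F s‖ = (1 + s) ^ γ * ‖F s‖ := by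
        rw [← Real.rpow_add_one (by positivity : (1:ℝ) + s ≠ 0)]
        ring_nf
      calc (1 + s ^ 2) ^ σ * s * ‖F s‖ ≤ (1 + s) ^ γ * ‖F s‖ := by rw [← h3]; exact h2
        _ ≤ K := hK s hspos
        _ ≤ K' := le_max_left _ _
  have hGnorm : ‖Φ G‖ ≤ K' := hnorm G K' hK'0 hGbound
  intro f hf1 hf2
  rw [hfact, hmul]
  have h1 := hres σ le_rfl t ht f hf1 hf2
  have hpos : 0 < t ^ (-(n/2)) * (1 + t) ^ (n/2 - ρ) := by positivity
  have hint : 0 ≤ ∫ x, ‖f x‖ ∂μ := integral_nonneg fun x => norm_nonneg _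
  calc ‖((Φ G).comp (Φ fun l => (((1 + t ^ 2 * l ^ 2) ^ (-σ) : ℝ) : ℂ)))
        (hf2.toLp f)‖
      = ‖(Φ G) ((Φ fun l => (((1 + t ^ 2 * l ^ 2) ^ (-σ) : ℝ) : ℂ)) (hf2.toLp f))‖ := rfl
    _ ≤ ‖Φ G‖ * ‖(Φ fun l => (((1 + t ^ 2 * l ^ 2) ^ (-σ) : ℝ) : ℂ)) (hf2.toLp f)‖ :=
        (Φ G).le_opNorm _
    _ ≤ K' * (C * t ^ (-(n/2)) * (1 + t) ^ (n/2 - ρ) * ∫ x, ‖f x‖ ∂μ) :=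
        mul_le_mul hGnorm h1 (norm_nonneg _) hK'0
    _ ≤ C * (K' + 1) * t ^ (-(n/2)) * (1 + t) ^ (n/2 - ρ) * ∫ x, ‖f x‖ ∂μ := by
        have hK'lt : K' ≤ K' + 1 := by linarith
        have h0 : 0 < t ^ (-(n/2)) := Real.rpow_pos_of_pos ht _
        have h0' : 0 < (1 + t) ^ (n/2 - ρ) := Real.rpow_pos_of_pos (by linarith) _
        nlinarith [mul_nonneg (mul_nonneg h0.le h0'.le) hint,
          mul_nonneg (mul_nonneg (mul_nonneg hC.le h0.le) h0'.le) hint]
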